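/- The sequence (D_{n,k})_{k≥0}, where D_{n,k} is the number of signed permutations π ∈ B_n with exc_A(π) = k, is log-concave: for all n ≥ 3 and all k ≥ 1, D_{n,k}^2 ≥ D_{n,k−1} · D_{n,k+1}. -/

import Mathlib

open Finset Polynomial

/-- The group of colored permutations `G_{r,n} = Z_r ≀ S_n`, realized as bijections of the
colored alphabet `Σ = [n] × {0,…,r-1}` commuting with the color shift. -/
def ColoredPerm (r n : ℕ) [NeZero r] : Type :=
  {π : Equiv.Perm (Fin n × Fin r) //
    ∀ x : Fin n × Fin r, π (x.1, x.2 + 1) = ((π x).1, (π x).2 + 1)}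

/-- The color order on the colored alphabet:
`1^[r-1] < ⋯ < n^[r-1] < ⋯ < 1^[0] < ⋯ < n^[0]` (higher color is smaller). -/
def colorLt {r n : ℕ} (x y : Fin n × Fin r) : Prop :=
  y.2 < x.2 ∨ (x.2 = y.2 ∧ x.1 < y.1)

/-- The excedance number `exc` of a colored permutation. -/
noncomputable def cExc {r n : ℕ} [NeZero r] (π : ColoredPerm r n) : ℕ :=
  Nat.card {x : Fin n × Fin r // colorLt x (π.1 x)}

/-- `exc_A(π) = |{i ∈ [n-1] : π(i) > i}|` (positions are the color-0 letters,
and `i ∈ [n-1]` corresponds to `i.val + 1 < n`). -/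
noncomputable def cExcA {r n : ℕ} [NeZero r] (π : ColoredPerm r n) : ℕ :=
  Nat.card {i : Fin n // i.val + 1 < n ∧ colorLt (i, 0) (π.1 (i, 0))}

/-- `csum(π)`: the sum of the colors appearing in the window notation of `π`. -/
def csum {r n : ℕ} [NeZero r] (π : ColoredPerm r n) : ℕ :=
  ∑ i : Fin n, (π.1 (i, 0)).2.val

/-- `D_{n,k}`: the number of signed permutations `π ∈ B_n` with `exc_A(π) = k`. -/
noncomputable def DB (n k : ℕ) : ℕ :=
  Nat.card {π : ColoredPerm 2 n // cExcA π = k}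

namespace DBAux

/-! ### Binomial coefficients are TP2 -/

lemma choose_tp2_adj (j j' k : ℕ) (hj : j ≤ j') :
    j.choose (k+1) * j'.choose k ≤ j.choose k * j'.choose (k+1) := by
  have h1 : (j.choose (k+1) * j'.choose k) * (k+1) = (j.choose k * (j - k)) * j'.choose k := by
    rw [← Nat.choose_succ_right_eq]; ring
  have h2 : (j.choose k * j'.choose (k+1)) * (k+1) = (j.choose k * (j' - k)) * j'.choose k := by
    rw [mul_assoc, Nat.choose_succ_right_eq]; ring
  have : (j.choose (k+1) * j'.choose k) * (k+1) ≤ (j.choose k * j'.choose (k+1)) * (k+1) := by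
    rw [h1, h2]
    exact Nat.mul_le_mul_right _ (Nat.mul_le_mul_left _ (Nat.sub_le_sub_right hj k))
  exact Nat.le_of_mul_le_mul_right this (Nat.succ_pos k)

lemma choose_tp2 (j j' k k' : ℕ) (hj : j ≤ j') (hk : k ≤ k') :
    j.choose k' * j'.choose k ≤ j.choose k * j'.choose k' := by
  induction k' with
  | zero =>
    interval_cases k
    simp
  | succ m ih =>
    rcases Nat.lt_or_ge k (m+1) with hkm | hkm
    · have hk' : k ≤ m := by omega
      by_cases hz : j.choose m = 0
      · have : j < m := by
          have := Nat.choose_eq_zero_iff.mp hz; omega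
        have : j.choose (m+1) = 0 := Nat.choose_eq_zero_of_lt (by omega)
        simp [this]
      · have hjm : m ≤ j := by
          by_contra h; exact hz (Nat.choose_eq_zero_of_lt (by omega))
        have hj'm : 0 < j'.choose m := Nat.choose_pos (le_trans hjm hj)
        have A1 : j.choose (m+1) * j'.choose m ≤ j.choose m * j'.choose (m+1) :=
          choose_tp2_adj j j' m hj
        have IH := ih hk'
        -- (j.choose (m+1) * j'.choose k) * j'.choose m ≤ (j.choose k * j'.choose (m+1)) * j'.choose m
        have step : (j.choose (m+1) * j'.choose k) * (j.choose m * j'.choose m)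
            ≤ (j.choose k * j'.choose (m+1)) * (j.choose m * j'.choose m) := by
          calc (j.choose (m+1) * j'.choose k) * (j.choose m * j'.choose m)
              = (j.choose (m+1) * j'.choose m) * (j.choose m * j'.choose k) := by ring
            _ ≤ (j.choose m * j'.choose (m+1)) * (j.choose m * j'.choose k) :=
             Nat.mul_le_mul_right _ A1
            _ = (j.choose m * (j.choose m * j'.choose k)) * j'.choose (m+1) := by ring
            _ ≤ (j.choose m * (j.choose k * j'.choose m)) * j'.choose (m+1) :=
                Nat.mul_le_mul_right _ (Nat.mul_le_mul_left _ IH)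
            _ = (j.choose k * j'.choose (m+1)) * (j.choose m * j'.choose m) := by ring
        have hpos : 0 < j.choose m * j'.choose m :=
          Nat.mul_pos (Nat.pos_of_ne_zero hz) hj'm
        exact Nat.le_of_mul_le_mul_right step hpos
    · have : k = m + 1 := by omega
      subst this; rfl

/-! ### strong log-concavity from adjacent log-concavity -/



lemma amgm_nat (a b : ℕ) : 2*(a*b) ≤ a*a + b*b := by
  rcases Nat.le_total a b with h | h
  · obtain ⟨d, rfl⟩ : ∃ d, b = a + d := ⟨b - a, by omega⟩; nlinarith
  · obtain ⟨d, rfl⟩ : ∃ d, a = b + d := ⟨a - b, by omega⟩; nlinarith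

lemma strong_of_adj (A : ℕ → ℕ) (hadj : ∀ m, A m * A (m+2) ≤ A (m+1) * A (m+1))
    (huv : ∀ m, A m = 0 → A (m+1) = 0) :
    ∀ u v, u ≤ v → A u * A (v+2) ≤ A (u+1) * A (v+1) := by
  intro u v huv'
  obtain ⟨d, rfl⟩ : ∃ d, v = u + d := ⟨v - u, by omega⟩
  clear huv'
  induction d generalizing u with
  | zero => exact hadj u
  | succ d ih =>
    set v := u + (d+1) with hv
    by_cases hz : A (v+1) = 0
    · have : A (v+2) = 0 := huv _ hz
      simp [this]
    · have hAv : A v ≠ 0 := fun h => hz (huv _ h)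
      have key : A v * (A u * A (v+2)) ≤ A v * (A (u+1) * A (v+1)) := by
        calc A v * (A u * A (v+2)) = A u * (A v * A (v+2)) := by ring
          _ ≤ A u * (A (v+1) * A (v+1)) := Nat.mul_le_mul_left _ (hadj v)
          _ = (A u * A (v+1)) * A (v+1) := by ring
          _ ≤ (A (u+1) * A v) * A (v+1) := by
              refine Nat.mul_le_mul_right _ ?_
              have h := ih u
              have ev : u + d + 2 = v + 1 := by omega
              have ev2 : u + d + 1 = v := by omega
              rw [ev, ev2] at h
              exact h
          _ = A v * (A (u+1) * A (v+1)) := by ring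
      exact Nat.le_of_mul_le_mul_left key (Nat.pos_of_ne_zero hAv)

lemma E_pos0 (E : ℕ → ℕ → ℕ) (hbase0 : E 0 0 = 1)
    (hrec0 : ∀ n, E (n+1) 0 = E n 0) : ∀ n, 0 < E n 0 := by
  intro n
  induction n with
  | zero => omega
  | succ n ih => rw [hrec0]; exact ih

lemma E_vanish (E : ℕ → ℕ → ℕ)
    (hbase : ∀ j, E 0 (j+1) = 0)
    (hrec : ∀ n k, E (n+1) (k+1) = (k+2) * E n (k+1) + (n - k) * E n k) :
    ∀ n j, 1 ≤ j → n ≤ j → E n j = 0 := by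
  intro n
  induction n with
  | zero => intro j h1 _; obtain ⟨m, rfl⟩ : ∃ m, j = m + 1 := ⟨j - 1, by omega⟩; exact hbase m
  | succ n ih =>
    intro j h1 h2
    obtain ⟨k, rfl⟩ : ∃ m, j = m + 1 := ⟨j - 1, by omega⟩
    rw [hrec]
    have e1 : E n (k+1) = 0 := ih (k+1) (by omega) (by omega)
    rcases Nat.eq_zero_or_pos k with rfl | hk
    · have : n = 0 := by omega
      subst this
      simp [e1]
    · have e2 : E n k = 0 := ih k (by omega) (by omega)
      simp [e1, e2]

lemma E_posn (E : ℕ → ℕ → ℕ) (hbase0 : E 0 0 = 1)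
    (hrec0 : ∀ n, E (n+1) 0 = E n 0)
    (hrec : ∀ n k, E (n+1) (k+1) = (k+2) * E n (k+1) + (n - k) * E n k) :
    ∀ n j, j < n → 0 < E n j := by
  intro n
  induction n with
  | zero => intro j h; omega
  | succ n ih =>
    intro j hj
    rcases Nat.eq_zero_or_pos j with rfl | hjp
    · exact E_pos0 E hbase0 hrec0 (n+1)
    · obtain ⟨k, rfl⟩ : ∃ m, j = m + 1 := ⟨j - 1, by omega⟩
      rw [hrec]
      have hp : 0 < E n k := ih k (by omega)
      have : 0 < (n - k) * E n k := Nat.mul_pos (by omega) hp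
      omega

lemma E_upvanish (E : ℕ → ℕ → ℕ) (hbase0 : E 0 0 = 1)
    (hbase : ∀ j, E 0 (j+1) = 0)
    (hrec0 : ∀ n, E (n+1) 0 = E n 0)
    (hrec : ∀ n k, E (n+1) (k+1) = (k+2) * E n (k+1) + (n - k) * E n k) :
    ∀ n j, E n j = 0 → E n (j+1) = 0 := by
  intro n j h
  rcases Nat.lt_or_ge j n with hjn | hjn
  · have := E_posn E hbase0 hrec0 hrec n j hjn
    omega
  · rcases Nat.eq_zero_or_pos n with rfl | hn
    · rcases Nat.eq_zero_or_pos j with rfl | hj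
      · rw [hbase0] at h; omega
      · exact hbase j
    · exact E_vanish E hbase hrec n (j+1) (by omega) (by omega)

lemma E_adj (E : ℕ → ℕ → ℕ) (hbase0 : E 0 0 = 1)
    (hbase : ∀ j, E 0 (j+1) = 0)
    (hrec0 : ∀ n, E (n+1) 0 = E n 0)
    (hrec : ∀ n k, E (n+1) (k+1) = (k+2) * E n (k+1) + (n - k) * E n k) :
    ∀ n j, E n j * E n (j+2) ≤ E n (j+1) * E n (j+1) := by
  intro n
  induction n with
  | zero =>
    intro j
    have h2 : E 0 (j+2) = 0 := hbase (j+1)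
    rw [h2]
    simp
  | succ n ih =>
    have hstrong : ∀ u v, u ≤ v → E n u * E n (v+2) ≤ E n (u+1) * E n (v+1) :=
      strong_of_adj (E n) ih (E_upvanish E hbase0 hbase hrec0 hrec n)
    intro j
    rcases Nat.eq_zero_or_pos j with rfl | hjp
    · rw [hrec0, show (0:ℕ)+2 = 1+1 from rfl, hrec, hrec]
      have h1 : E n 0 * E n (1+1) ≤ E n 1 * E n 1 := by
        have := ih 0; simpa using this
      set y0 := E n 0
      set y1 := E n 1
      set y2 := E n (1+1)
      have hc : (n-1) * (y0 * y1) ≤ 4*n * (y0 * y1) := Nat.mul_le_mul_right _ (by omega)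
      calc y0 * ((1+2) * y2 + (n-1) * y1)
          = 3 * (y0 * y2) + (n-1) * (y0 * y1) := by ring
        _ ≤ 3 * (y1 * y1) + (n-1) * (y0 * y1) :=
            Nat.add_le_add_right (Nat.mul_le_mul_left _ h1) _
        _ ≤ 4 * (y1 * y1) + 4*n * (y0 * y1) + (n*n) * (y0*y0) := by
            have h3 : 3 * (y1*y1) ≤ 4 * (y1*y1) := Nat.mul_le_mul_right _ (by omega)
            have h4 : 0 ≤ (n*n) * (y0*y0) := Nat.zero_le _
            linarith
        _ = ((0+2) * y1 + (n-0) * y0) * ((0+2) * y1 + (n-0) * y0) := by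
            rw [Nat.sub_zero]; ring
    · obtain ⟨k, rfl⟩ : ∃ m, j = m + 1 := ⟨j - 1, by omega⟩
      rw [show k+1+2 = (k+2)+1 from rfl, show k+1+1 = (k+1)+1 from rfl, hrec, hrec, hrec]
      rcases Nat.lt_or_ge k (n-1) with hk | hk
      · obtain ⟨m, hm⟩ : ∃ m, n = k + 2 + m := ⟨n - k - 2, by omega⟩
        subst hm
        have e0 : k + 2 + m - k = m + 2 := by omega
        have e1 : k + 2 + m - (k+1) = m + 1 := by omega
        have e2 : k + 2 + m - (k+2) = m := by omega
        rw [e0, e1, e2]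
        have h1 : E (k+2+m) (k+1) * E (k+2+m) (k+2+1) ≤ E (k+2+m) (k+1+1) * E (k+2+m) (k+1+1) := by
          have := ih (k+1); simpa [show k+1+2 = k+2+1 from rfl] using this
        have h2 : E (k+2+m) k * E (k+2+m) (k+2+1) ≤ E (k+2+m) (k+1) * E (k+2+m) (k+1+1) := by
          have := hstrong k (k+1) (by omega)
          simpa [show k+1+2 = k+2+1 from rfl] using this
        have h3 : E (k+2+m) k * E (k+2+m) (k+1+1) ≤ E (k+2+m) (k+1) * E (k+2+m) (k+1) := by
          have := ih k; simpa using this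
        set x0 := E (k+2+m) k
        set x1 := E (k+2+m) (k+1)
        set x2 := E (k+2+m) (k+1+1)
        set x3 := E (k+2+m) (k+2+1)
        have B1 : (k+2)*(k+4)*(x1*x3) ≤ (k+2)*(k+4)*(x2*x2) := Nat.mul_le_mul_left _ h1
        have B2 : (m+2)*(k+4)*(x0*x3) ≤ (m+2)*(k+4)*(x1*x2) := Nat.mul_le_mul_left _ h2
        have B3 : (m+2)*m*(x0*x2) ≤ (m+2)*m*(x1*x1) := Nat.mul_le_mul_left _ h3
        have amgm : 2*(x1*x2) ≤ x1*x1 + x2*x2 := amgm_nat x1 x2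
        calc ((k+2) * x1 + (m+2) * x0) * ((k+2+2) * x3 + m * x2)
            = (k+2)*(k+4)*(x1*x3) + (k+2)*m*(x1*x2) + (m+2)*(k+4)*(x0*x3) + (m+2)*m*(x0*x2) := by
              ring
          _ ≤ (k+2)*(k+4)*(x2*x2) + (k+2)*m*(x1*x2) + (m+2)*(k+4)*(x1*x2) + (m+2)*m*(x1*x1) := by
              linarith
          _ ≤ ((k+1+2) * x2 + (m+1) * x1) * ((k+1+2) * x2 + (m+1) * x1) := by
              have key : (k+2)*(k+4)*(x2*x2) + (k+2)*m*(x1*x2) + (m+2)*(k+4)*(x1*x2) + (m+2)*m*(x1*x1)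
                  + (x1*x1 + x2*x2)
                  = ((k+1+2) * x2 + (m+1) * x1) * ((k+1+2) * x2 + (m+1) * x1) + 2*(x1*x2) := by
                ring
              linarith
      · have e1 : E n (k+1) = 0 := by
          rcases Nat.eq_zero_or_pos n with rfl | hn
          · exact hbase k
          · exact E_vanish E hbase hrec n (k+1) (by omega) (by omega)
        have e2 : E n (k+1+1) = 0 := E_upvanish E hbase0 hbase hrec0 hrec n (k+1) e1
        have e3 : E n (k+2+1) = 0 := E_upvanish E hbase0 hbase hrec0 hrec n (k+2) (by simpa using e2)
        rw [e2, e3]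
        simp

lemma E_strong (E : ℕ → ℕ → ℕ) (hbase0 : E 0 0 = 1)
    (hbase : ∀ j, E 0 (j+1) = 0)
    (hrec0 : ∀ n, E (n+1) 0 = E n 0)
    (hrec : ∀ n k, E (n+1) (k+1) = (k+2) * E n (k+1) + (n - k) * E n k) :
    ∀ n u v, u ≤ v → E n u * E n (v+2) ≤ E n (u+1) * E n (v+1) := fun n =>
  strong_of_adj (E n) (E_adj E hbase0 hbase hrec0 hrec n) (E_upvanish E hbase0 hbase hrec0 hrec n)



lemma antisym_sum (M : ℕ) (g : ℕ → ℕ → ℤ) :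
    ∑ j ∈ range M, ∑ j' ∈ range M, g j j'
      = (∑ j' ∈ range M, ∑ j ∈ range j', (g j j' + g j' j)) + ∑ j ∈ range M, g j j := by
  induction M with
  | zero => simp
  | succ M ih =>
    simp only [sum_range_succ, sum_add_distrib, ih]
    ring

def tcoef (A : ℕ → ℤ) (M x : ℕ) : ℤ := ∑ j ∈ range (M+1), A j * (j.choose x : ℤ)

def bseq (A : ℕ → ℤ) (j : ℕ) : ℤ := (if j = 0 then 0 else A (j-1)) - A j

lemma tcoef_trunc (A : ℕ → ℤ) (M x : ℕ) (hAM : A M = 0) :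
    tcoef A M x = ∑ j ∈ range M, A j * (j.choose x : ℤ) := by
  rw [tcoef, sum_range_succ, hAM]; simp

lemma telescope (A : ℕ → ℤ) (M x : ℕ) (hAM : A M = 0) :
    ∑ j ∈ range (M+1), bseq A j * (j.choose (x+1) : ℤ) = tcoef A M x := by
  have expand : ∀ j, bseq A j * (j.choose (x+1) : ℤ)
      = (if j = 0 then 0 else A (j-1)) * (j.choose (x+1) : ℤ) - A j * (j.choose (x+1) : ℤ) := by
    intro j; rw [bseq]; ring
  simp only [expand]
  rw [sum_sub_distrib]
  have S1 : ∑ j ∈ range (M+1), (if j = 0 then 0 else A (j-1)) * (j.choose (x+1) : ℤ)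
      = ∑ j ∈ range M, A j * ((j.choose x : ℤ) + (j.choose (x+1) : ℤ)) := by
    rw [sum_range_succ']
    have h0 : (if (0:ℕ) = 0 then (0:ℤ) else A (0-1)) * ((Nat.choose 0 (x+1) : ℕ) : ℤ) = 0 := by
      simp
    rw [h0, add_zero]
    apply sum_congr rfl
    intro j _
    rw [if_neg (Nat.succ_ne_zero j)]
    simp only [Nat.add_sub_cancel]
    have : (j+1).choose (x+1) = j.choose x + j.choose (x+1) := Nat.choose_succ_succ j x
    rw [this]
    push_cast
    ring
  rw [S1]
  have S2 : ∑ j ∈ range (M+1), A j * (j.choose (x+1) : ℤ)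
      = ∑ j ∈ range M, A j * (j.choose (x+1) : ℤ) := by
    rw [sum_range_succ, hAM]; simp
  rw [S2, tcoef_trunc A M x hAM, ← sum_sub_distrib]
  apply sum_congr rfl
  intro j _
  ring

lemma transform_lc (A : ℕ → ℤ) (M : ℕ) (hnn : ∀ j, 0 ≤ A j)
    (hsupp : ∀ j, M ≤ j → A j = 0)
    (hS : ∀ u v, u ≤ v → A u * A (v+2) ≤ A (u+1) * A (v+1)) (k : ℕ) :
    tcoef A M k * tcoef A M (k+2) ≤ tcoef A M (k+1) ^ 2 := by
  have hAM : A M = 0 := hsupp M le_rfl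
  have key : 0 ≤ tcoef A M (k+1) * tcoef A M (k+1) - tcoef A M k * tcoef A M (k+2) := by
    have e1 : tcoef A M (k+1) * tcoef A M (k+1) - tcoef A M k * tcoef A M (k+2)
        = (∑ j ∈ range (M+1), A j * (j.choose (k+1) : ℤ))
            * (∑ j' ∈ range (M+1), bseq A j' * (j'.choose (k+2) : ℤ))
          - (∑ j ∈ range (M+1), A j * (j.choose (k+2) : ℤ))
            * (∑ j' ∈ range (M+1), bseq A j' * (j'.choose (k+1) : ℤ)) := by
      rw [show k + 2 = (k+1)+1 from rfl, telescope A M (k+1) hAM, telescope A M k hAM]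
      simp only [tcoef]
      ring
    rw [e1]
    rw [sum_mul_sum, sum_mul_sum, ← sum_sub_distrib]
    simp only [← sum_sub_distrib]
    have e2 : ∀ j j', A j * (j.choose (k+1) : ℤ) * (bseq A j' * (j'.choose (k+2) : ℤ))
        - A j * (j.choose (k+2) : ℤ) * (bseq A j' * (j'.choose (k+1) : ℤ))
        = (fun j j' => A j * bseq A j' *
            ((j.choose (k+1) : ℤ) * (j'.choose (k+2) : ℤ)
              - (j.choose (k+2) : ℤ) * (j'.choose (k+1) : ℤ))) j j' := by
      intro j j'; simp only; ring
    simp only [e2]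
    set g : ℕ → ℕ → ℤ := fun j j' => A j * bseq A j' *
            ((j.choose (k+1) : ℤ) * (j'.choose (k+2) : ℤ)
              - (j.choose (k+2) : ℤ) * (j'.choose (k+1) : ℤ)) with hg
    rw [antisym_sum (M+1) g]
    have diag : ∀ j ∈ range (M+1), g j j = 0 := by intro j _; rw [hg]; simp only; ring
    rw [sum_congr rfl diag]
    simp only [sum_const, smul_zero, add_zero]
    apply sum_nonneg
    intro j' hj'
    apply sum_nonneg
    intro j hj
    have hjj' : j < j' := mem_range.mp hj
    have pair : g j j' + g j' j
        = (A j * (if j' = 0 then 0 else A (j'-1)) - A j' * (if j = 0 then 0 else A (j-1)))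
          * ((j.choose (k+1) : ℤ) * (j'.choose (k+2) : ℤ)
              - (j.choose (k+2) : ℤ) * (j'.choose (k+1) : ℤ)) := by
      rw [hg]
      simp only [bseq]
      ring
    rw [pair]
    apply mul_nonneg
    · obtain ⟨m, rfl⟩ : ∃ m, j' = m + 1 := ⟨j' - 1, by omega⟩
      rw [if_neg (Nat.succ_ne_zero m)]
      simp only [Nat.add_sub_cancel]
      rcases Nat.eq_zero_or_pos j with rfl | hjpos
      · rw [if_pos rfl]
        simpa using mul_nonneg (hnn 0) (hnn m)
      · obtain ⟨i, rfl⟩ : ∃ i, j = i + 1 := ⟨j - 1, by omega⟩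
        rw [if_neg (Nat.succ_ne_zero i)]
        simp only [Nat.add_sub_cancel]
        have him : i ≤ m - 1 := by omega
        have := hS i (m-1) him
        rw [show m - 1 + 2 = m + 1 by omega, show m - 1 + 1 = m by omega] at this
        linarith
    · have h := choose_tp2 j j' (k+1) (k+2) (le_of_lt hjj') (by omega)
      have hcast : (j.choose (k+2) : ℤ) * (j'.choose (k+1) : ℤ)
          ≤ (j.choose (k+1) : ℤ) * (j'.choose (k+2) : ℤ) := by exact_mod_cast h
      linarith
  nlinarith [key]



def exc {n : ℕ} (σ : Equiv.Perm (Fin n)) : ℕ := #(univ.filter (fun i => i < σ i))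

def Efun (n j : ℕ) : ℕ := #(univ.filter (fun σ : Equiv.Perm (Fin n) => exc σ = j))

lemma exc_fin_zero (σ : Equiv.Perm (Fin 0)) : exc σ = 0 := by
  simp [exc]

lemma Efun_zero_zero : Efun 0 0 = 1 := by
  have : (univ.filter (fun σ : Equiv.Perm (Fin 0) => exc σ = 0)) = univ := by
    apply filter_true_of_mem
    intro σ _
    exact exc_fin_zero σ
  rw [Efun, this]
  simp [Fintype.card_perm]

lemma Efun_zero_succ (j : ℕ) : Efun 0 (j+1) = 0 := by
  rw [Efun, card_eq_zero]
  apply filter_false_of_mem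
  intro σ _
  rw [exc_fin_zero σ]
  omega

lemma card_filter_fin_succ {n : ℕ} (P : Fin (n+1) → Prop) [DecidablePred P] :
    #(univ.filter P) = (if P 0 then 1 else 0) + #(univ.filter fun i : Fin n => P i.succ) := by
  rw [card_filter, Fin.sum_univ_succ, card_filter]

lemma exc_decompose_zero {n : ℕ} (τ : Equiv.Perm (Fin n)) :
    exc (Equiv.Perm.decomposeFin.symm (0, τ)) = exc τ := by
  rw [exc, card_filter_fin_succ]
  rw [if_neg (by simp [Equiv.Perm.decomposeFin_symm_apply_zero])]
  rw [exc, zero_add]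
  refine congrArg Finset.card ?_
  ext i
  simp only [mem_filter, mem_univ, true_and]
  simp only [Equiv.Perm.decomposeFin_symm_apply_succ, Equiv.swap_self, Equiv.refl_apply,
    Fin.succ_lt_succ_iff]


lemma exc_decompose_succ_aux {n : ℕ} (τ : Equiv.Perm (Fin n)) (q : Fin n) :
    exc (Equiv.Perm.decomposeFin.symm (q.succ, τ))
      = 1 + #(univ.filter fun i : Fin n => ¬ i = τ.symm q ∧ i < τ i) := by
  rw [exc, card_filter_fin_succ]
  rw [if_pos (by simp [Equiv.Perm.decomposeFin_symm_apply_zero, Fin.succ_pos])]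
  congr 1
  refine congrArg Finset.card ?_
  ext i
  simp only [mem_filter, mem_univ, true_and]
  simp only [Equiv.Perm.decomposeFin_symm_apply_succ]
  by_cases h : τ i = q
  · have hit : i = τ.symm q := by rw [← h, Equiv.symm_apply_apply]
    rw [h, Equiv.swap_apply_right]
    simp only [Fin.not_lt_zero, false_iff, not_and]
    intro hne
    exact absurd hit hne
  · rw [Equiv.swap_apply_of_ne_of_ne (Fin.succ_ne_zero _) (by
      intro hc
      exact h (Fin.succ_injective _ hc))]
    rw [Fin.succ_lt_succ_iff]
    constructor
    · intro hlt
      refine ⟨?_, hlt⟩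
      intro hi
      exact h (by rw [hi, Equiv.apply_symm_apply])
    · intro hh
      exact hh.2

lemma exc_split_at {n : ℕ} (τ : Equiv.Perm (Fin n)) (t : Fin n) :
    exc τ = #(univ.filter fun i : Fin n => ¬ i = t ∧ i < τ i)
      + (if t < τ t then 1 else 0) := by
  rw [exc]
  have h1 : univ.filter (fun i : Fin n => i < τ i)
      = (univ.filter fun i : Fin n => ¬ i = t ∧ i < τ i)
        ∪ (univ.filter fun i : Fin n => i = t ∧ i < τ i) := by
    ext i
    simp only [mem_filter, mem_union, mem_univ, true_and]
    by_cases h : i = t <;> simp [h]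
  rw [h1, card_union_of_disjoint]
  · congr 1
    by_cases h : t < τ t
    · rw [if_pos h]
      have : (univ.filter fun i : Fin n => i = t ∧ i < τ i) = {t} := by
        ext i
        simp only [mem_filter, mem_univ, true_and, mem_singleton]
        constructor
        · exact fun ⟨h1, _⟩ => h1
        · rintro rfl; exact ⟨rfl, h⟩
      rw [this, card_singleton]
    · rw [if_neg h]
      rw [card_eq_zero]
      apply filter_false_of_mem
      rintro i _ ⟨rfl, hlt⟩
      exact h hlt
  · rw [disjoint_left]
    intro i hi1 hi2
    simp only [mem_filter, mem_univ, true_and] at hi1 hi2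
    exact hi1.1 hi2.1

lemma exc_decompose_succ_lt {n : ℕ} (τ : Equiv.Perm (Fin n)) (q : Fin n) (h : τ.symm q < q) :
    exc (Equiv.Perm.decomposeFin.symm (q.succ, τ)) = exc τ := by
  rw [exc_decompose_succ_aux, exc_split_at τ (τ.symm q)]
  rw [if_pos (by rwa [Equiv.apply_symm_apply])]
  omega

lemma exc_decompose_succ_ge {n : ℕ} (τ : Equiv.Perm (Fin n)) (q : Fin n) (h : ¬ τ.symm q < q) :
    exc (Equiv.Perm.decomposeFin.symm (q.succ, τ)) = exc τ + 1 := by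
  rw [exc_decompose_succ_aux, exc_split_at τ (τ.symm q)]
  rw [if_neg (by rwa [Equiv.apply_symm_apply])]
  omega

lemma V_eq {n : ℕ} (τ : Equiv.Perm (Fin n)) :
    #(univ.filter fun q : Fin n => τ.symm q < q) = exc τ := by
  rw [exc]
  apply card_bij' (fun q _ => τ.symm q) (fun i _ => τ i)
  · intro q hq
    simp only [mem_filter, mem_univ, true_and] at hq ⊢
    rwa [Equiv.apply_symm_apply]
  · intro i hi
    simp only [mem_filter, mem_univ, true_and] at hi ⊢
    rwa [Equiv.symm_apply_apply]
  · intro q _; exact Equiv.apply_symm_apply τ q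
  · intro i _; exact Equiv.symm_apply_apply τ i

lemma exc_le {n : ℕ} (σ : Equiv.Perm (Fin n)) : exc σ ≤ n := by
  calc exc σ ≤ #(univ : Finset (Fin n)) := card_filter_le _ _
    _ = n := by simp

lemma Nτ {n : ℕ} (τ : Equiv.Perm (Fin n)) (k : ℕ) :
    #(univ.filter fun p : Fin (n+1) => exc (Equiv.Perm.decomposeFin.symm (p, τ)) = k)
      = (if exc τ = k then exc τ + 1 else 0) + (if exc τ + 1 = k then n - exc τ else 0) := by
  rw [card_filter_fin_succ]
  have h0 : exc (Equiv.Perm.decomposeFin.symm ((0 : Fin (n+1)), τ)) = exc τ :=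
    exc_decompose_zero τ
  have hsucc : ∀ q : Fin n, (exc (Equiv.Perm.decomposeFin.symm ((Fin.succ q), τ)) = k)
      ↔ (if τ.symm q < q then exc τ = k else exc τ + 1 = k) := by
    intro q
    by_cases h : τ.symm q < q
    · rw [if_pos h, exc_decompose_succ_lt τ q h]
    · rw [if_neg h, exc_decompose_succ_ge τ q h]
  have hcard : #(univ.filter fun q : Fin n =>
        exc (Equiv.Perm.decomposeFin.symm ((Fin.succ q), τ)) = k)
      = (if exc τ = k then 1 else 0) * exc τ + (if exc τ + 1 = k then 1 else 0) * (n - exc τ) := by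
    rw [card_filter]
    have : ∀ q : Fin n, (if exc (Equiv.Perm.decomposeFin.symm ((Fin.succ q), τ)) = k then (1:ℕ) else 0)
        = if τ.symm q < q then (if exc τ = k then 1 else 0) else (if exc τ + 1 = k then 1 else 0) := by
      intro q
      by_cases h : τ.symm q < q
      · rw [if_pos h, exc_decompose_succ_lt τ q h]
      · rw [if_neg h, exc_decompose_succ_ge τ q h]
    rw [sum_congr rfl (fun q _ => this q)]
    rw [sum_ite]
    rw [sum_const, sum_const, smul_eq_mul, smul_eq_mul]
    rw [V_eq]
    have : #(univ.filter fun q : Fin n => ¬ τ.symm q < q) = n - exc τ := by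
      have hsplit := card_filter_add_card_filter_not
        (s := (univ : Finset (Fin n))) (fun q => τ.symm q < q)
      rw [V_eq] at hsplit
      have : #(univ : Finset (Fin n)) = n := by simp
      omega
    rw [this]
    ring
  rw [h0, hcard]
  rcases eq_or_ne (exc τ) k with he | he
  · rw [if_pos he, if_pos he, if_neg (by omega), if_neg (by omega)]
    ring
  · rw [if_neg he, if_neg he]
    by_cases h2 : exc τ + 1 = k
    · rw [if_pos h2, if_pos h2]; ring
    · rw [if_neg h2, if_neg h2]; ring

lemma Efun_card_transfer {n : ℕ} (k : ℕ) :
    Efun (n+1) k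
      = #(univ.filter fun pt : Fin (n+1) × Equiv.Perm (Fin n) =>
          exc (Equiv.Perm.decomposeFin.symm pt) = k) := by
  rw [Efun, ← Fintype.card_subtype, ← Fintype.card_subtype]
  exact Fintype.card_congr (Equiv.subtypeEquiv Equiv.Perm.decomposeFin
    (fun σ => by rw [Equiv.symm_apply_apply]))

lemma Efun_sum (n k : ℕ) : Efun (n+1) k
    = ∑ τ : Equiv.Perm (Fin n),
        ((if exc τ = k then exc τ + 1 else 0) + (if exc τ + 1 = k then n - exc τ else 0)) := by
  rw [Efun_card_transfer, card_filter, Fintype.sum_prod_type_right]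
  apply sum_congr rfl
  intro τ _
  rw [← card_filter]
  exact Nτ τ k

lemma sum_ite_const_filter {α : Type*} [Fintype α] (p : α → Prop) [DecidablePred p] (c : ℕ) :
    ∑ x : α, (if p x then c else 0) = c * #(univ.filter p) := by
  have h : ∀ x : α, (if p x then c else 0) = c * (if p x then 1 else 0) := by
    intro x; split_ifs <;> ring
  rw [sum_congr rfl fun x _ => h x, ← mul_sum, ← card_filter]

lemma Efun_rec0 (n : ℕ) : Efun (n+1) 0 = Efun n 0 := by
  rw [Efun_sum]
  have h : ∀ τ : Equiv.Perm (Fin n),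
      ((if exc τ = 0 then exc τ + 1 else 0) + (if exc τ + 1 = 0 then n - exc τ else 0))
        = (if exc τ = 0 then 1 else 0) := by
    intro τ
    by_cases h : exc τ = 0 <;> simp [h]
  rw [sum_congr rfl fun τ _ => h τ, sum_ite_const_filter, one_mul, Efun]

lemma Efun_rec (n k : ℕ) : Efun (n+1) (k+1) = (k+2) * Efun n (k+1) + (n - k) * Efun n k := by
  rw [Efun_sum]
  have h : ∀ τ : Equiv.Perm (Fin n),
      ((if exc τ = k+1 then exc τ + 1 else 0) + (if exc τ + 1 = k+1 then n - exc τ else 0))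
        = (if exc τ = k+1 then k+2 else 0) + (if exc τ = k then n - k else 0) := by
    intro τ
    by_cases h1 : exc τ = k+1
    · rw [if_pos h1, if_pos h1, if_neg (by omega), if_neg (by omega), h1]
    · rw [if_neg h1, if_neg h1]
      by_cases h2 : exc τ = k
      · rw [if_pos (by omega), if_pos h2, h2]
      · rw [if_neg (by omega), if_neg h2]
  rw [sum_congr rfl fun τ _ => h τ, sum_add_distrib, sum_ite_const_filter, sum_ite_const_filter]
  rfl



lemma fin2_cases : ∀ c : Fin 2, c = 0 ∨ c = 1 := by decide

/-- packaging a permutation and sign vector into a signed permutation -/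
def G {n : ℕ} (x : Equiv.Perm (Fin n) × (Fin n → Fin 2)) : ColoredPerm 2 n :=
  ⟨{ toFun := fun y => (x.1 y.1, x.2 y.1 + y.2)
     invFun := fun y => (x.1.symm y.1, y.2 - x.2 (x.1.symm y.1))
     left_inv := by
       intro y
       simp only [Equiv.symm_apply_apply]
       exact Prod.ext rfl (by abel)
     right_inv := by
       intro y
       simp only [Equiv.apply_symm_apply]
       exact Prod.ext rfl (by abel) },
   by
     intro y
     refine Prod.ext rfl ?_
     simp only [Equiv.coe_fn_mk]
     exact (add_assoc _ _ _).symm⟩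

lemma G_apply {n : ℕ} (x : Equiv.Perm (Fin n) × (Fin n → Fin 2)) (y : Fin n × Fin 2) :
    (G x).1 y = (x.1 y.1, x.2 y.1 + y.2) := rfl

lemma colored_apply {n : ℕ} (π : ColoredPerm 2 n) (i : Fin n) (c : Fin 2) :
    π.1 (i, c) = ((π.1 (i, 0)).1, (π.1 (i, 0)).2 + c) := by
  rcases fin2_cases c with rfl | rfl
  · exact Prod.ext rfl (by rw [add_zero])
  · have h := π.2 (i, 0)
    simpa using h

lemma G_bijective {n : ℕ} : Function.Bijective (G (n := n)) := by
  constructor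
  · intro x y hxy
    have h : ∀ i : Fin n, (G x).1 (i, 0) = (G y).1 (i, 0) := fun i => by rw [hxy]
    have h1 : ∀ i : Fin n, x.1 i = y.1 i ∧ x.2 i = y.2 i := by
      intro i
      have := h i
      rw [G_apply, G_apply] at this
      refine ⟨congrArg Prod.fst this, ?_⟩
      have h2 := congrArg Prod.snd this
      simpa using h2
    exact Prod.ext (Equiv.ext fun i => (h1 i).1) (funext fun i => (h1 i).2)
  · intro π
    set f : Fin n → Fin n := fun i => (π.1 (i, 0)).1 with hf
    set e : Fin n → Fin 2 := fun i => (π.1 (i, 0)).2 with he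
    have hinj : Function.Injective f := by
      intro i i' hii
      have key : π.1 (i', e i - e i') = π.1 (i, 0) := by
        rw [colored_apply π i' (e i - e i')]
        have h1 : (π.1 (i', 0)).1 = (π.1 (i, 0)).1 := hii.symm
        have h2 : (π.1 (i', 0)).2 + (e i - e i') = (π.1 (i, 0)).2 := by
          show e i' + (e i - e i') = e i
          abel
        rw [h1, h2]
      have h3 := π.1.injective key
      exact (congrArg Prod.fst h3).symm
    have hbij : Function.Bijective f := (Finite.injective_iff_bijective).mp hinj
    refine ⟨(Equiv.ofBijective f hbij, e), ?_⟩
    apply Subtype.ext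
    apply Equiv.ext
    intro y
    rw [G_apply, colored_apply π y.1 y.2]
    exact Prod.ext rfl rfl

lemma cExcA_G {n : ℕ} (x : Equiv.Perm (Fin n) × (Fin n → Fin 2)) :
    cExcA (G x) = #(univ.filter fun i : Fin n => x.2 i = 0 ∧ i < x.1 i) := by
  classical
  rw [cExcA]
  rw [Nat.card_eq_fintype_card, Fintype.card_subtype]
  congr 1
  apply filter_congr
  intro i _
  rw [G_apply]
  simp only [colorLt, add_zero]
  constructor
  · rintro ⟨h1, h2 | h3⟩
    · exact absurd h2 (Fin.not_lt_zero _)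
    · exact ⟨h3.1.symm, h3.2⟩
  · rintro ⟨h1, h2⟩
    have hn : (i : ℕ) + 1 < n := by
      have := (x.1 i).isLt
      have := h2
      omega
    exact ⟨hn, Or.inr ⟨h1.symm, h2⟩⟩

lemma count_eps {n : ℕ} (S : Finset (Fin n)) (k : ℕ) :
    #(univ.filter fun ε : Fin n → Fin 2 => #(S.filter fun i => ε i = 0) = k)
      = (#S).choose k * 2 ^ (n - #S) := by
  classical
  have hcard : ((S.powersetCard k) ×ˢ ((univ \ S).powerset)).card
      = (#S).choose k * 2 ^ (n - #S) := by
    rw [card_product, card_powersetCard, card_powerset, card_sdiff_of_subset (subset_univ S)]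
    simp
  rw [← hcard]
  apply card_bij' (fun ε _ => (S.filter fun i => ε i = 0, (univ \ S).filter fun i => ε i = 0))
    (fun pr _ => fun i => if i ∈ pr.1 ∪ pr.2 then 0 else 1)
  case hi =>
      intro ε hε
      rw [mem_filter] at hε
      rw [mem_product, mem_powersetCard, mem_powerset]
      exact ⟨⟨filter_subset _ _, hε.2⟩, filter_subset _ _⟩
  case hj =>
      intro pr hpr
      rw [mem_product, mem_powersetCard, mem_powerset] at hpr
      obtain ⟨⟨hA, hAk⟩, hB⟩ := hpr
      rw [mem_filter]
      refine ⟨mem_univ _, ?_⟩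
      rw [← hAk]
      congr 1
      ext i
      rw [mem_filter]
      show i ∈ S ∧ (if i ∈ pr.1 ∪ pr.2 then (0:Fin 2) else 1) = 0 ↔ i ∈ pr.1
      constructor
      · rintro ⟨hiS, hif⟩
        by_cases hiu : i ∈ pr.1 ∪ pr.2
        · rcases mem_union.mp hiu with h | h
          · exact h
          · exact absurd (mem_sdiff.mp (hB h)).2 (fun hc => hc hiS)
        · rw [if_neg hiu] at hif
          exact absurd hif (by decide)
      · intro hiA
        exact ⟨hA hiA, by rw [if_pos (mem_union_left _ hiA)]⟩
  case left_inv =>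
      intro ε hε
      funext i
      by_cases h0 : ε i = 0
      · have : i ∈ (S.filter fun i => ε i = 0) ∪ ((univ \ S).filter fun i => ε i = 0) := by
          by_cases hiS : i ∈ S
          · exact mem_union_left _ (mem_filter.mpr ⟨hiS, h0⟩)
          · exact mem_union_right _ (mem_filter.mpr ⟨mem_sdiff.mpr ⟨mem_univ _, hiS⟩, h0⟩)
        rw [if_pos this, h0]
      · have : i ∉ (S.filter fun i => ε i = 0) ∪ ((univ \ S).filter fun i => ε i = 0) := by
          intro hc
          rcases mem_union.mp hc with h | h
          · exact h0 (mem_filter.mp h).2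
          · exact h0 (mem_filter.mp h).2
        rw [if_neg this]
        rcases fin2_cases (ε i) with h | h
        · exact absurd h h0
        · exact h.symm
  case right_inv =>
      intro pr hpr
      rw [mem_product, mem_powersetCard, mem_powerset] at hpr
      obtain ⟨⟨hA, hAk⟩, hB⟩ := hpr
      have hdisj : ∀ i ∈ S, i ∉ pr.2 := by
        intro i hiS hc
        exact (mem_sdiff.mp (hB hc)).2 hiS
      refine Prod.ext ?_ ?_
      · simp only
        ext i
        rw [mem_filter]
        constructor
        · rintro ⟨hiS, hif⟩
          by_cases hiu : i ∈ pr.1 ∪ pr.2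
          · rcases mem_union.mp hiu with h | h
            · exact h
            · exact absurd h (hdisj i hiS)
          · rw [if_neg hiu] at hif
            exact absurd hif (by decide)
        · intro hiA
          exact ⟨hA hiA, by rw [if_pos (mem_union_left _ hiA)]⟩
      · simp only
        ext i
        rw [mem_filter, mem_sdiff]
        constructor
        · rintro ⟨⟨_, hiS⟩, hif⟩
          by_cases hiu : i ∈ pr.1 ∪ pr.2
          · rcases mem_union.mp hiu with h | h
            · exact absurd (hA h) hiS
            · exact h
          · rw [if_neg hiu] at hif
            exact absurd hif (by decide)
        · intro hiB
          have hiS : i ∉ S := fun hc => hdisj i hc hiB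
          exact ⟨⟨mem_univ _, hiS⟩, by rw [if_pos (mem_union_right _ hiB)]⟩

lemma DB_formula_aux {n k : ℕ} :
    (∑ σ : Equiv.Perm (Fin n), (exc σ).choose k * 2 ^ (n - exc σ))
      = ∑ j ∈ range (n+1), Efun n j * (2 ^ (n - j) * (j.choose k)) := by
  classical
  rw [← Finset.sum_fiberwise_of_maps_to
    (g := exc) (t := range (n+1))
    (fun σ _ => mem_range.mpr (by have := exc_le σ; omega))
    (f := fun σ => (exc σ).choose k * 2 ^ (n - exc σ))]
  apply sum_congr rfl
  intro j _
  have hc : ∀ σ ∈ univ.filter (fun σ : Equiv.Perm (Fin n) => exc σ = j),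
      (exc σ).choose k * 2 ^ (n - exc σ) = (j.choose k) * 2 ^ (n - j) := by
    intro σ hσ
    rw [mem_filter] at hσ
    rw [hσ.2]
  rw [sum_congr rfl hc, sum_const, smul_eq_mul, Efun]
  ring


lemma DB_eq_card {n k : ℕ} :
    DB n k = #(univ.filter fun x : Equiv.Perm (Fin n) × (Fin n → Fin 2) =>
      #(univ.filter fun i : Fin n => x.2 i = 0 ∧ i < x.1 i) = k) := by
  classical
  rw [DB]
  have e : {x : Equiv.Perm (Fin n) × (Fin n → Fin 2) // cExcA (G x) = k}
      ≃ {π : ColoredPerm 2 n // cExcA π = k} :=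
    Equiv.subtypeEquiv (Equiv.ofBijective G G_bijective) (fun x => Iff.rfl)
  rw [← Nat.card_congr e, Nat.card_eq_fintype_card, Fintype.card_subtype]
  congr 1
  ext x
  simp only [mem_filter, mem_univ, true_and]
  rw [cExcA_G]

lemma DB_sum {n k : ℕ} :
    DB n k = ∑ σ : Equiv.Perm (Fin n), (exc σ).choose k * 2 ^ (n - exc σ) := by
  classical
  rw [DB_eq_card, card_filter, Fintype.sum_prod_type]
  apply sum_congr rfl
  intro σ _
  rw [← card_filter]
  have step1 : #(univ.filter fun ε : Fin n → Fin 2 =>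
        #(univ.filter fun i : Fin n => ε i = 0 ∧ i < σ i) = k)
      = #(univ.filter fun ε : Fin n → Fin 2 =>
        #((univ.filter fun i : Fin n => i < σ i).filter fun i => ε i = 0) = k) := by
    congr 1
    ext ε
    simp only [mem_filter, mem_univ, true_and]
    have : (univ.filter fun i : Fin n => ε i = 0 ∧ i < σ i)
        = ((univ.filter fun i : Fin n => i < σ i).filter fun i => ε i = 0) := by
      rw [filter_filter]
      ext i
      simp only [mem_filter, mem_univ, true_and]
      tauto
    rw [this]
  rw [step1, count_eps]
  rfl

lemma DB_formula {n k : ℕ} :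
    DB n k = ∑ j ∈ range (n+1), Efun n j * (2 ^ (n - j) * (j.choose k)) := by
  rw [DB_sum, DB_formula_aux]

end DBAux

open DBAux in
/-- The sequence `(D_{n,k})_k` is log-concave: for `n ≥ 3` and `k ≥ 1`,
`D_{n,k}² ≥ D_{n,k−1}·D_{n,k+1}`. -/
theorem DB_log_concave (n k : ℕ) (hn : 3 ≤ n) (hk : 1 ≤ k) :
    DB n (k - 1) * DB n (k + 1) ≤ DB n k ^ 2 := by
  obtain ⟨m, rfl⟩ : ∃ m, k = m + 1 := ⟨k - 1, by omega⟩
  rw [show m + 1 - 1 = m by omega]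
  set A : ℕ → ℤ := fun j => ((Efun n j * 2 ^ (n - j) : ℕ) : ℤ) with hA
  have hDB : ∀ x, (DB n x : ℤ) = tcoef A n x := by
    intro x
    rw [DB_formula (n := n) (k := x), tcoef]
    push_cast
    apply sum_congr rfl
    intro j _
    simp only [hA]
    push_cast
    ring
  have hnn : ∀ j, 0 ≤ A j := fun j => Int.ofNat_nonneg _
  have hvan : ∀ j, 1 ≤ j → n ≤ j → Efun n j = 0 := E_vanish Efun Efun_zero_succ Efun_rec n
  have hsupp : ∀ j, n ≤ j → A j = 0 := by
    intro j hj
    have h0 : Efun n j = 0 := hvan j (by omega) hj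
    simp [hA, h0]
  have hS : ∀ u v, u ≤ v → A u * A (v+2) ≤ A (u+1) * A (v+1) := by
    intro u v huv
    have hEs := E_strong Efun Efun_zero_zero Efun_zero_succ Efun_rec0 Efun_rec n u v huv
    rcases Nat.lt_or_ge n (v+2) with hbig | hok
    · have h0 : Efun n (v+2) = 0 := hvan (v+2) (by omega) (by omega)
      have hz : A (v+2) = 0 := by simp [hA, h0]
      rw [hz, mul_zero]
      exact mul_nonneg (hnn _) (hnn _)
    · have hexp : 2 ^ (n - u) * 2 ^ (n - (v+2)) = 2 ^ (n - (u+1)) * 2 ^ (n - (v+1)) := by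
        rw [← pow_add, ← pow_add]
        congr 1
        omega
      have hnat : (Efun n u * 2^(n-u)) * (Efun n (v+2) * 2^(n-(v+2)))
          ≤ (Efun n (u+1) * 2^(n-(u+1))) * (Efun n (v+1) * 2^(n-(v+1))) := by
        calc (Efun n u * 2^(n-u)) * (Efun n (v+2) * 2^(n-(v+2)))
            = (Efun n u * Efun n (v+2)) * (2^(n-u) * 2^(n-(v+2))) := by ring
          _ ≤ (Efun n (u+1) * Efun n (v+1)) * (2^(n-u) * 2^(n-(v+2))) :=
              Nat.mul_le_mul_right _ hEs
          _ = (Efun n (u+1) * Efun n (v+1)) * (2^(n-(u+1)) * 2^(n-(v+1))) := by rw [hexp]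
          _ = (Efun n (u+1) * 2^(n-(u+1))) * (Efun n (v+1) * 2^(n-(v+1))) := by ring
      simp only [hA]
      exact_mod_cast hnat
  have hmain := transform_lc A n hnn hsupp hS m
  rw [← hDB, ← hDB, ← hDB] at hmain
  exact_mod_cast hmain
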